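/- Let m ≥ 1, h > 0, and let A, C, D be m×m real matrices with Aᵀ = A and Dᵀ = D, and suppose I_m + shCᵀ is invertible for every s ∈ [0,1]. For s ∈ [0,1] define S_{s,h} = [[(I_m+shCᵀ)⁻¹, −sh(I_m+shCᵀ)⁻¹D],[shA(I_m+shCᵀ)⁻¹, −s²h²A(I_m+shCᵀ)⁻¹D + I_m + shC]]. Then S_{s,h} is symplectic for every s ∈ [0,1], the map s ↦ S_{s,h} is continuous, S_{0,h} = I_{2m}, and S_{1,h} = S_h(A,C,D); thus s ↦ S_{s,h} is a continuous path of symplectic matrices joining the identity to S_h(A,C,D). -/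

import Mathlib

open Matrix

/-- The standard symplectic matrix `J = [[0, -I_m],[I_m, 0]]` in `m × m` blocks. -/
def Jmat (m : ℕ) : Matrix (Fin m ⊕ Fin m) (Fin m ⊕ Fin m) ℝ :=
  Matrix.fromBlocks 0 (-1) 1 0

/-- A `2m × 2m` real matrix `M` is symplectic iff `Mᵀ * J * M = J`. -/
def IsSymplectic {m : ℕ} (M : Matrix (Fin m ⊕ Fin m) (Fin m ⊕ Fin m) ℝ) : Prop :=
  Mᵀ * Jmat m * M = Jmat m

/-- The matrix `S_h(A,C,D)` with blocks
`[[(I+hCᵀ)⁻¹, −h(I+hCᵀ)⁻¹D],[hA(I+hCᵀ)⁻¹, −h²A(I+hCᵀ)⁻¹D + I + hC]]`. -/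
noncomputable def Sh (m : ℕ) (h : ℝ) (A C D : Matrix (Fin m) (Fin m) ℝ) :
    Matrix (Fin m ⊕ Fin m) (Fin m ⊕ Fin m) ℝ :=
  Matrix.fromBlocks (1 + h • Cᵀ)⁻¹ (-(h • ((1 + h • Cᵀ)⁻¹ * D)))
    (h • (A * (1 + h • Cᵀ)⁻¹)) (-((h ^ 2) • (A * (1 + h • Cᵀ)⁻¹ * D)) + 1 + h • C)

lemma symp_aux (m : ℕ) (t : ℝ) (A C D : Matrix (Fin m) (Fin m) ℝ)
    (hA : Aᵀ = A) (hD : Dᵀ = D) (hu : IsUnit (1 + t • Cᵀ)) :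
    IsSymplectic (Matrix.fromBlocks (1 + t • Cᵀ)⁻¹ (-(t • ((1 + t • Cᵀ)⁻¹ * D)))
      (t • (A * (1 + t • Cᵀ)⁻¹)) (-((t ^ 2) • (A * (1 + t • Cᵀ)⁻¹ * D)) + 1 + t • C)) := by
  set X : Matrix (Fin m) (Fin m) ℝ := 1 + t • Cᵀ with hX
  set B : Matrix (Fin m) (Fin m) ℝ := X⁻¹ with hB
  have hud : IsUnit X.det := (Matrix.isUnit_iff_isUnit_det X).mp hu
  have h1 : X * B = 1 := Matrix.mul_nonsing_inv X hud
  have hXt : Xᵀ = 1 + t • C := by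
    simp [hX, Matrix.transpose_add, Matrix.transpose_smul]
  have h3 : Bᵀ * (1 + t • C) = 1 := by
    rw [← hXt, ← Matrix.transpose_mul, h1, Matrix.transpose_one]
  have h1' : B + t • (Cᵀ * B) = 1 := by
    rw [hX] at h1; rw [← h1, add_mul, one_mul, smul_mul_assoc]
  have h3' : Bᵀ + t • (Bᵀ * C) = 1 := by
    rw [← h3, mul_add, mul_one, mul_smul_comm]
  have h5 : B * D + t • (Cᵀ * (B * D)) = D := by
    have := congrArg (fun M => M * D) h1
    simpa [hX, add_mul, smul_mul_assoc, mul_assoc] using this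
  have h6 : D * Bᵀ + t • (D * (Bᵀ * C)) = D := by
    have := congrArg (fun M => D * M) h3
    simpa [mul_add, mul_smul_comm, mul_assoc] using this
  unfold IsSymplectic Jmat
  rw [Matrix.fromBlocks_transpose, Matrix.fromBlocks_multiply, Matrix.fromBlocks_multiply,
    Matrix.fromBlocks_inj]
  refine ⟨?_, ?_, ?_, ?_⟩ <;>
    simp only [mul_zero, zero_mul, zero_add, add_zero, mul_one, one_mul, mul_neg, neg_mul,
      Matrix.transpose_smul, Matrix.transpose_mul, Matrix.transpose_neg, Matrix.transpose_add,
      Matrix.transpose_one, hA, hD, smul_mul_assoc, mul_smul_comm, mul_add, add_mul,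
      smul_smul, smul_neg, neg_smul, smul_add, mul_assoc, neg_neg, pow_two]
  · abel
  · rw [← h3']; module
  · rw [← h1']; module
  · have e : -(-((t * (t * t)) • (D * (Bᵀ * (A * (B * D))))) + t • (B * D) + (t * t) • (Cᵀ * (B * D))) +
        (-((t * (t * t)) • (D * (Bᵀ * (A * (B * D))))) + t • (D * Bᵀ) + (t * t) • (D * (Bᵀ * C)))
        = t • (D * Bᵀ + t • (D * (Bᵀ * C))) - t • (B * D + t • (Cᵀ * (B * D))) := by module
    rw [e, h5, h6, sub_self]

/-- the path `s ↦ S_{s,h}` is a continuous path of symplectic matrices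
joining the identity to `S_h(A,C,D)`. -/
theorem stmt2 (m : ℕ) (hm : 1 ≤ m) (h : ℝ) (hh : 0 < h)
    (A C D : Matrix (Fin m) (Fin m) ℝ) (hA : Aᵀ = A) (hD : Dᵀ = D)
    (hinv : ∀ s ∈ Set.Icc (0 : ℝ) 1, IsUnit (1 + (s * h) • Cᵀ))
    (S : ℝ → Matrix (Fin m ⊕ Fin m) (Fin m ⊕ Fin m) ℝ)
    (hS : ∀ s : ℝ, S s =
      Matrix.fromBlocks (1 + (s * h) • Cᵀ)⁻¹ (-((s * h) • ((1 + (s * h) • Cᵀ)⁻¹ * D)))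
        ((s * h) • (A * (1 + (s * h) • Cᵀ)⁻¹))
        (-((s ^ 2 * h ^ 2) • (A * (1 + (s * h) • Cᵀ)⁻¹ * D)) + 1 + (s * h) • C)) :
    (∀ s ∈ Set.Icc (0 : ℝ) 1, IsSymplectic (S s)) ∧
    ContinuousOn S (Set.Icc (0 : ℝ) 1) ∧
    S 0 = 1 ∧ S 1 = Sh m h A C D := by
  refine ⟨?_, ?_, ?_, ?_⟩
  · intro s hs
    rw [hS s, show s ^ 2 * h ^ 2 = (s * h) ^ 2 by ring]
    exact symp_aux m (s * h) A C D hA hD (hinv s hs)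
  · have hc1 : Continuous fun s : ℝ => (1 + (s * h) • Cᵀ) := by
      exact continuous_const.add ((continuous_id.mul continuous_const).smul continuous_const)
    have hdet : ∀ s ∈ Set.Icc (0:ℝ) 1, ((1 + (s * h) • Cᵀ).det) ≠ 0 := fun s hs =>
      ((Matrix.isUnit_iff_isUnit_det _).mp (hinv s hs)).ne_zero
    have hinvc : ContinuousOn (fun s : ℝ => (1 + (s * h) • Cᵀ)⁻¹) (Set.Icc 0 1) := by
      have hdc : ContinuousOn (fun s : ℝ => ((1 + (s * h) • Cᵀ).det)⁻¹) (Set.Icc 0 1) :=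
        (hc1.matrix_det.continuousOn).inv₀ hdet
      have hac : Continuous fun s : ℝ => (1 + (s * h) • Cᵀ).adjugate := hc1.matrix_adjugate
      exact (hdc.smul hac.continuousOn).congr fun s _ => by rw [Matrix.inv_def, Ring.inverse_eq_inv]; rfl
    have hG : Continuous (fun p : ℝ × Matrix (Fin m) (Fin m) ℝ =>
        Matrix.fromBlocks p.2 (-((p.1 * h) • (p.2 * D))) ((p.1 * h) • (A * p.2))
          (-((p.1 ^ 2 * h ^ 2) • (A * p.2 * D)) + 1 + (p.1 * h) • C)) := by
      apply Continuous.matrix_fromBlocks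
      · exact continuous_snd
      · exact ((continuous_fst.mul continuous_const).smul
          (continuous_snd.matrix_mul continuous_const)).neg
      · exact (continuous_fst.mul continuous_const).smul
          (continuous_const.matrix_mul continuous_snd)
      · exact ((((continuous_fst.pow 2).mul continuous_const).smul
          ((continuous_const.matrix_mul continuous_snd).matrix_mul continuous_const)).neg.add
          continuous_const).add ((continuous_fst.mul continuous_const).smul continuous_const)
    have hpair : ContinuousOn (fun s : ℝ => (s, (1 + (s * h) • Cᵀ)⁻¹)) (Set.Icc 0 1) :=
      continuous_id.continuousOn.prodMk hinvc
    exact (hG.comp_continuousOn hpair).congr fun s _ => hS s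
  · rw [hS 0]
    norm_num
  · rw [hS 1, Sh]
    norm_num
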